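/- Let X be the 'hyperbolas space': the subset of ℝ² consisting of the segments of the coordinate axes inside the disk of radius 10 together with, for each n ∈ ℕ, the four arcs {(x,y) : xy = ±1/n, ‖(x,y)‖ ≤ 10}. Then {(0,0)} has a neighbourhood inside the union of the two coordinate-axis segments that deformation retracts to (0,0) and is relatively open in the union of the two axis segments, but (0,0) has no neighbourhood that is open in X and deformation retracts in X onto {(0,0)}: every X-open neighbourhood of the origin contains points of some hyperbola branch that lie in a path component of the neighbourhood not containing (0,0). -/

import Mathlib

open Set

/-- The "hyperbolas space": the pieces of the coordinate axes inside the disk of radius 10,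
together with the arcs of the hyperbolas `x·y = ±1/n` inside that disk. -/
def hyperbolasSpace : Set (ℝ × ℝ) :=
  {z | z.1 ^ 2 + z.2 ^ 2 ≤ 100 ∧
    (z.1 = 0 ∨ z.2 = 0 ∨ ∃ n : ℕ, 0 < n ∧ (z.1 * z.2 = 1 / n ∨ z.1 * z.2 = -(1 / n)))}

/-- The origin, as a point of the hyperbolas space. -/
def hypOrigin : ↥hyperbolasSpace :=
  ⟨(0, 0), by constructor <;> norm_num [hyperbolasSpace]⟩

/-- The union of the two axis segments inside the hyperbolas space. -/
def hypAxes : Set ↥hyperbolasSpace := {z | (z : ℝ × ℝ).1 = 0 ∨ (z : ℝ × ℝ).2 = 0}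

/-- In the hyperbolas space `X`, the origin has a neighbourhood inside the
union `A` of the two coordinate-axis segments which is relatively open in `A` and
deformation retracts onto the origin; but the origin possesses no neighbourhood which is
open in `X` and deformation retracts within `X` onto the origin. -/
lemma partA :
    (∃ U : Set ↥hyperbolasSpace, hypOrigin ∈ U ∧ U ⊆ hypAxes ∧
      (∃ W : Set ↥hyperbolasSpace, IsOpen W ∧ U = W ∩ hypAxes) ∧
      ∃ H : ↥U → unitInterval → ↥hyperbolasSpace,
        Continuous (fun q : ↥U × unitInterval => H q.1 q.2) ∧
        (∀ x : ↥U, ∀ t : unitInterval, H x t ∈ U) ∧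
        (∀ x : ↥U, H x 1 = (x : ↥hyperbolasSpace)) ∧
        (∀ x : ↥U, H x 0 = hypOrigin)) := by
  refine ⟨hypAxes, Or.inl rfl, le_refl _, ⟨univ, isOpen_univ, (univ_inter _).symm⟩, ?_⟩
  have key : ∀ (x : ↥hypAxes) (t : unitInterval),
      ((t : ℝ) * ((x : ↥hyperbolasSpace) : ℝ × ℝ).1,
       (t : ℝ) * ((x : ↥hyperbolasSpace) : ℝ × ℝ).2) ∈ hyperbolasSpace := by
    rintro ⟨⟨⟨a, b⟩, hab1, _⟩, hax⟩ ⟨t, ht0, ht1⟩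
    refine ⟨?_, ?_⟩
    · simp only at hab1 ⊢
      have h1 : (0:ℝ) ≤ (1 - t^2) * a^2 :=
        mul_nonneg (by nlinarith) (sq_nonneg a)
      have h2 : (0:ℝ) ≤ (1 - t^2) * b^2 :=
        mul_nonneg (by nlinarith) (sq_nonneg b)
      nlinarith
    · rcases hax with h | h
      · exact Or.inl (mul_eq_zero_of_right _ h)
      · exact Or.inr (Or.inl (mul_eq_zero_of_right _ h))
  refine ⟨fun x t => ⟨_, key x t⟩, ?_, ?_, ?_, ?_⟩
  · apply Continuous.subtype_mk
    fun_prop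
  · rintro ⟨x, hax⟩ t
    rcases hax with h | h
    · exact Or.inl (mul_eq_zero_of_right _ h)
    · exact Or.inr (mul_eq_zero_of_right _ h)
  · rintro ⟨⟨⟨a, b⟩, hmem⟩, hax⟩
    apply Subtype.ext
    simp
  · rintro ⟨⟨⟨a, b⟩, hmem⟩, hax⟩
    apply Subtype.ext
    simp [hypOrigin]

lemma partB :
    ¬ ∃ V : Set ↥hyperbolasSpace, IsOpen V ∧ hypOrigin ∈ V ∧
      ∃ H : ↥V → unitInterval → ↥hyperbolasSpace,
        Continuous (fun q : ↥V × unitInterval => H q.1 q.2) ∧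
        (∀ x : ↥V, H x 1 = (x : ↥hyperbolasSpace)) ∧
        (∀ x : ↥V, H x 0 = hypOrigin) := by
  rintro ⟨V, hV, h0, H, Hcont, H1, H0⟩
  obtain ⟨ε, εpos, hball⟩ := Metric.isOpen_iff.mp hV hypOrigin h0
  -- pick n with 1/n < ε
  obtain ⟨n, hn⟩ := exists_nat_gt (1/ε)
  have hnpos : 0 < n := by
    by_contra h
    push_neg at h
    interval_cases n
    simp at hn
    exact absurd hn (not_lt.mpr (le_of_lt (by positivity)))
  have hnR : (0:ℝ) < n := by exact_mod_cast hnpos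
  have hinv : (1:ℝ)/n < ε := by
    rw [div_lt_iff₀ hnR]
    rw [div_lt_iff₀ εpos] at hn
    nlinarith
  set p : ℝ × ℝ := (1/n, 1/n) with hp
  have hpX : p ∈ hyperbolasSpace := by
    refine ⟨?_, Or.inr (Or.inr ⟨n^2, by positivity, Or.inl ?_⟩)⟩
    · have h1 : (1:ℝ)/n ≤ 1 := by
        rw [div_le_one hnR]; exact_mod_cast hnpos
      have h2 : (1/(n:ℝ))^2 ≤ 1 := pow_le_one₀ (by positivity) h1
      simp only [hp]
      linarith
    · push_cast
      field_simp
      simp only [hp]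
      field_simp
  have hpV : (⟨p, hpX⟩ : ↥hyperbolasSpace) ∈ V := by
    apply hball
    rw [Metric.mem_ball, Subtype.dist_eq, hypOrigin, Prod.dist_eq]
    simp only [hp]
    simp only [Real.dist_eq, sub_zero, sup_idem]
    rw [abs_of_pos (by positivity)]
    exact hinv
  -- the path
  set x : ↥V := ⟨⟨p, hpX⟩, hpV⟩ with hx
  set γ : unitInterval → ℝ := fun t =>
    ((H x t : ℝ × ℝ)).1 * ((H x t : ℝ × ℝ)).2 with hγ
  have hγcont : Continuous γ := by
    have : Continuous (fun t : unitInterval => H x t) :=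
      Hcont.comp (Continuous.prodMk_right x)
    fun_prop
  have hconn : IsPreconnected (range γ) := isPreconnected_range hγcont
  have h0mem : (0:ℝ) ∈ range γ := ⟨0, by simp [hγ, H0 x, hypOrigin]⟩
  have h1mem : (1:ℝ)/(n^2) ∈ range γ := by
    refine ⟨1, ?_⟩
    simp only [hγ, H1 x]
    show p.1 * p.2 = 1/(n^2:ℝ)
    simp only [hp]
    field_simp
  -- the intermediate value c = 2/(2n²+1)
  set c : ℝ := 2/(2*(n:ℝ)^2+1) with hc
  have hcpos : 0 < c := by positivity
  have hcle : c ≤ 1/(n^2) := by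
    rw [div_le_div_iff₀ (by positivity) (by positivity)]
    nlinarith
  have hcmem : c ∈ range γ := by
    have := hconn.Icc_subset h0mem h1mem
    exact this ⟨le_of_lt hcpos, hcle⟩
  obtain ⟨t, ht⟩ := hcmem
  have ht' : ((H x t : ℝ × ℝ)).1 * ((H x t : ℝ × ℝ)).2 = c := ht
  -- but γ t lies in {0} ∪ {±1/m}, contradiction
  obtain ⟨-, hcase⟩ := (H x t).2
  rcases hcase with h | h | ⟨m, hm, h | h⟩
  · rw [h, zero_mul] at ht'
    exact absurd ht' (ne_of_lt hcpos)
  · rw [h, mul_zero] at ht'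
    exact absurd ht' (ne_of_lt hcpos)
  · rw [ht'] at h
    have hmR : (0:ℝ) < m := by exact_mod_cast hm
    have h2 : (2:ℝ) * m = 2*(n:ℝ)^2+1 := by
      rw [hc] at h
      field_simp at h
      linarith
    have : 2 * m = 2 * n^2 + 1 := by exact_mod_cast h2
    omega
  · rw [ht'] at h
    have hmR : (0:ℝ) < m := by exact_mod_cast hm
    have h2 : (0:ℝ) < 1/m := by positivity
    rw [h] at hcpos
    linarith

theorem hyperbolasSpace_retractible_in_axes_but_not_in_X :
    -- (a) a relatively open neighbourhood of the origin in the axes, retractible to it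
    (∃ U : Set ↥hyperbolasSpace, hypOrigin ∈ U ∧ U ⊆ hypAxes ∧
      (∃ W : Set ↥hyperbolasSpace, IsOpen W ∧ U = W ∩ hypAxes) ∧
      ∃ H : ↥U → unitInterval → ↥hyperbolasSpace,
        Continuous (fun q : ↥U × unitInterval => H q.1 q.2) ∧
        (∀ x : ↥U, ∀ t : unitInterval, H x t ∈ U) ∧
        (∀ x : ↥U, H x 1 = (x : ↥hyperbolasSpace)) ∧
        (∀ x : ↥U, H x 0 = hypOrigin)) ∧
    -- (b) no X-open neighbourhood of the origin deformation retracts in X onto the origin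
    ¬ ∃ V : Set ↥hyperbolasSpace, IsOpen V ∧ hypOrigin ∈ V ∧
      ∃ H : ↥V → unitInterval → ↥hyperbolasSpace,
        Continuous (fun q : ↥V × unitInterval => H q.1 q.2) ∧
        (∀ x : ↥V, H x 1 = (x : ↥hyperbolasSpace)) ∧
        (∀ x : ↥V, H x 0 = hypOrigin) := ⟨partA, partB⟩
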